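/- Fix real constants K ≠ 0, C₁, C₄ ≠ 0, C₅, C₆, C₇, C₈, and define A, B : ℝ → ℝ by A(z) = (K/C₄²)·sinh²(C₄(z+C₅)) and B(z) = C₆·cosh(2C₄(z+C₅)) + C₇·sinh(2C₄(z+C₅)) − (z/2)·(C₁/K + 4C₄C₇) − z²/2 + C₈. Then on all of ℝ: A″(z)A(z) − (A′(z))² + 2K·A(z) = 0 and A(z)B‴(z) − A′(z)(B″(z)+1) + 2K(B′(z)+z) + C₁ = 0. -/

import Mathlib

/-- with `A(z) = (K/C₄²)·sinh²(C₄(z+C₅))` and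
`B(z) = C₆cosh(2C₄(z+C₅)) + C₇sinh(2C₄(z+C₅)) − (z/2)(C₁/K + 4C₄C₇) − z²/2 + C₈`,
the identities `A″A − (A′)² + 2K·A = 0` and
`A·B‴ − A′·(B″+1) + 2K·(B′+z) + C₁ = 0` hold on all of `ℝ`. -/
theorem stmt_17 (K C₁ C₄ C₅ C₆ C₇ C₈ : ℝ) (hK : K ≠ 0) (hC₄ : C₄ ≠ 0) :
    let A : ℝ → ℝ := fun z => K / C₄ ^ 2 * Real.sinh (C₄ * (z + C₅)) ^ 2
    let B : ℝ → ℝ := fun z =>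
      C₆ * Real.cosh (2 * C₄ * (z + C₅)) + C₇ * Real.sinh (2 * C₄ * (z + C₅))
        - z / 2 * (C₁ / K + 4 * C₄ * C₇) - z ^ 2 / 2 + C₈
    ∀ z : ℝ,
      deriv (deriv A) z * A z - (deriv A z) ^ 2 + 2 * K * A z = 0 ∧
      A z * deriv (deriv (deriv B)) z - deriv A z * (deriv (deriv B) z + 1)
        + 2 * K * (deriv B z + z) + C₁ = 0 := by
  intro A B
  have hv : ∀ x : ℝ, HasDerivAt (fun x => C₄ * (x + C₅)) C₄ x := fun x => by
    simpa using ((hasDerivAt_id x).add_const C₅).const_mul C₄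
  have hv2 : ∀ x : ℝ, HasDerivAt (fun x => 2 * C₄ * (x + C₅)) (2 * C₄) x := fun x => by
    simpa using ((hasDerivAt_id x).add_const C₅).const_mul (2 * C₄)
  -- A and its derivatives
  have hA : ∀ x, HasDerivAt A
      (2 * K / C₄ * (Real.sinh (C₄ * (x + C₅)) * Real.cosh (C₄ * (x + C₅)))) x := by
    intro x
    have h := (((hv x).sinh).pow 2).const_mul (K / C₄ ^ 2)
    refine h.congr_deriv ?_
    field_simp
    ring
  have hA' : deriv A = fun x =>
      2 * K / C₄ * (Real.sinh (C₄ * (x + C₅)) * Real.cosh (C₄ * (x + C₅))) :=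
    funext fun x => (hA x).deriv
  have hA2 : ∀ x, HasDerivAt (deriv A)
      (2 * K * (Real.cosh (C₄ * (x + C₅)) ^ 2 + Real.sinh (C₄ * (x + C₅)) ^ 2)) x := by
    intro x
    rw [hA']
    have h := (((hv x).sinh).mul ((hv x).cosh)).const_mul (2 * K / C₄)
    refine h.congr_deriv ?_
    field_simp
  -- B and its derivatives
  have hB : ∀ x, HasDerivAt B
      (2 * C₄ * (C₆ * Real.sinh (2 * C₄ * (x + C₅)) + C₇ * Real.cosh (2 * C₄ * (x + C₅)))
        - (C₁ / K + 4 * C₄ * C₇) / 2 - x) x := by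
    intro x
    have h1 := ((hv2 x).cosh).const_mul C₆
    have h2 := ((hv2 x).sinh).const_mul C₇
    have h3 : HasDerivAt (fun x : ℝ => x / 2 * (C₁ / K + 4 * C₄ * C₇))
        ((C₁ / K + 4 * C₄ * C₇) / 2) x := by
      have := ((hasDerivAt_id x).div_const 2).mul_const (C₁ / K + 4 * C₄ * C₇)
      refine this.congr_deriv ?_
      ring
    have h4 : HasDerivAt (fun x : ℝ => x ^ 2 / 2) x x := by
      simpa using ((hasDerivAt_pow 2 x).div_const 2)
    have h := ((((h1.add h2).sub h3).sub h4).add_const C₈)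
    refine h.congr_deriv ?_
    ring
  have hB' : deriv B = fun x =>
      2 * C₄ * (C₆ * Real.sinh (2 * C₄ * (x + C₅)) + C₇ * Real.cosh (2 * C₄ * (x + C₅)))
        - (C₁ / K + 4 * C₄ * C₇) / 2 - x :=
    funext fun x => (hB x).deriv
  have hB2 : ∀ x, HasDerivAt (deriv B)
      (4 * C₄ ^ 2 * (C₆ * Real.cosh (2 * C₄ * (x + C₅)) + C₇ * Real.sinh (2 * C₄ * (x + C₅)))
        - 1) x := by
    intro x
    rw [hB']
    have h1 := ((hv2 x).sinh).const_mul C₆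
    have h2 := ((hv2 x).cosh).const_mul C₇
    have h := (((h1.add h2).const_mul (2 * C₄)).sub_const ((C₁ / K + 4 * C₄ * C₇) / 2)).sub
      (hasDerivAt_id x)
    refine h.congr_deriv ?_
    ring
  have hB2' : deriv (deriv B) = fun x =>
      4 * C₄ ^ 2 * (C₆ * Real.cosh (2 * C₄ * (x + C₅)) + C₇ * Real.sinh (2 * C₄ * (x + C₅)))
        - 1 :=
    funext fun x => (hB2 x).deriv
  have hB3 : ∀ x, HasDerivAt (deriv (deriv B))
      (8 * C₄ ^ 3 * (C₆ * Real.sinh (2 * C₄ * (x + C₅)) + C₇ * Real.cosh (2 * C₄ * (x + C₅)))) x := by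
    intro x
    rw [hB2']
    have h1 := ((hv2 x).cosh).const_mul C₆
    have h2 := ((hv2 x).sinh).const_mul C₇
    have h := ((h1.add h2).const_mul (4 * C₄ ^ 2)).sub_const 1
    refine h.congr_deriv ?_
    ring
  intro z
  have hcs : Real.cosh (C₄ * (z + C₅)) ^ 2 = Real.sinh (C₄ * (z + C₅)) ^ 2 + 1 :=
    Real.cosh_sq _
  have hu : (2 : ℝ) * C₄ * (z + C₅) = 2 * (C₄ * (z + C₅)) := by ring
  constructor
  · rw [(hA2 z).deriv, hA']
    show _ * (K / C₄ ^ 2 * Real.sinh (C₄ * (z + C₅)) ^ 2) - _ + 2 * K *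
      (K / C₄ ^ 2 * Real.sinh (C₄ * (z + C₅)) ^ 2) = 0
    set s := Real.sinh (C₄ * (z + C₅)) with hs
    set c := Real.cosh (C₄ * (z + C₅)) with hc
    linear_combination (-2 * K ^ 2 / C₄ ^ 2 * s ^ 2) * hcs
  · rw [(hB3 z).deriv, hB2', hB', hA']
    show K / C₄ ^ 2 * Real.sinh (C₄ * (z + C₅)) ^ 2 * _ - _ + _ + _ = 0
    simp only [hu, Real.sinh_two_mul, Real.cosh_two_mul]
    set s := Real.sinh (C₄ * (z + C₅)) with hs
    set c := Real.cosh (C₄ * (z + C₅)) with hc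
    field_simp
    linear_combination ((4 * K * C₄ ^ 2) *
      (-2 * s * C₆ * c + C₇ * (1 - 2 * s ^ 2))) * hcs
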